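/- For k ≥ 3, let T_k be the tree obtained from the star K_{1,k} by subdividing every edge exactly once; explicitly T_k has center v, vertices x_1,...,x_k adjacent to v, and leaves y_1,...,y_k with y_i adjacent to x_i. Then the upper total domination number of T_k equals 2k: the set of all leaves and support vertices {x_1,...,x_k,y_1,...,y_k} is a minimal total dominating set of maximum cardinality. -/
import Mathlib


variable {V : Type*}

/-- `S` is a total dominating set of `G`: every vertex has a neighbor in `S`. -/
def isTDSet (G : SimpleGraph V) (S : Set V) : Prop := ∀ v : V, ∃ u ∈ S, G.Adj v u

/-- `S` is a minimal total dominating set of `G`. -/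
def isMinTDSet (G : SimpleGraph V) (S : Set V) : Prop :=
  isTDSet G S ∧ ∀ T : Set V, T ⊂ S → ¬ isTDSet G T

/-- Upper total domination number `Γ_t`. -/
noncomputable def upperTD (G : SimpleGraph V) [Fintype V] : ℕ :=
  sSup {n | ∃ S : Finset V, isMinTDSet G ↑S ∧ S.card = n}

/-- Total domination number `γ_t`. -/
noncomputable def totalDomNum (G : SimpleGraph V) [Fintype V] : ℕ :=
  sInf {n | ∃ S : Finset V, isTDSet G ↑S ∧ S.card = n}

/-- `S` is an open-open irredundant set: each `v ∈ S` has a neighbor not adjacent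
to any other vertex of `S`, i.e. `N(v) \ N(S \ {v}) ≠ ∅`. -/
def isOOIrr (G : SimpleGraph V) (S : Set V) : Prop :=
  ∀ v ∈ S, ∃ w, G.Adj v w ∧ ∀ u ∈ S, u ≠ v → ¬ G.Adj u w

/-- Open-open irredundance number `OOIR`. -/
noncomputable def ooirNum (G : SimpleGraph V) [Fintype V] : ℕ :=
  sSup {n | ∃ S : Finset V, isOOIrr G ↑S ∧ S.card = n}

/-- `M` is an induced matching: a set of edges of `G` whose endpoints induce a
1-regular subgraph (no two distinct edges share or join endpoints). -/
def isInducedMatching (G : SimpleGraph V) (M : Set (Sym2 V)) : Prop :=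
  (∀ e ∈ M, e ∈ G.edgeSet) ∧
  ∀ e ∈ M, ∀ f ∈ M, e ≠ f → ∀ u ∈ e, ∀ v ∈ f, u ≠ v ∧ ¬ G.Adj u v

/-- Induced matching number `ν_I`. -/
noncomputable def inducedMatchingNum (G : SimpleGraph V) [Fintype V] : ℕ :=
  sSup {n | ∃ M : Finset (Sym2 V), isInducedMatching G ↑M ∧ M.card = n}

/-- `L` is a total dominating sequence of `G`. -/
def isTDSeq (G : SimpleGraph V) (L : List V) : Prop :=
  L.Nodup ∧ isTDSet G {v | v ∈ L} ∧
  ∀ (i : ℕ) (h : i < L.length), ∃ w, G.Adj L[i] w ∧ ∀ u ∈ L.take i, ¬ G.Adj u w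

/-- Grundy total domination number. -/
noncomputable def grundyTD (G : SimpleGraph V) [Fintype V] : ℕ :=
  sSup {n | ∃ L : List V, isTDSeq G L ∧ L.length = n}


/-- The tree obtained from `K_{1,k}` by subdividing every edge once: center
`v = Sum.inl ()`, support vertices `x_i = Sum.inr (i, 0)` adjacent to `v`, and
leaves `y_i = Sum.inr (i, 1)` with `y_i` adjacent to `x_i`. -/
def T1star (k : ℕ) : SimpleGraph (Unit ⊕ Fin k × Fin 2) :=
  SimpleGraph.fromRel (fun a b =>
    match a, b with
    | Sum.inl _, Sum.inr p => p.2 = 0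
    | Sum.inr p, Sum.inr q => p.1 = q.1 ∧ p.2 = 0 ∧ q.2 = 1
    | _, _ => False)

section Aux
variable {k : ℕ}

lemma T1_adj_vx (i : Fin k) : (T1star k).Adj (Sum.inl ()) (Sum.inr (i, 0)) := by
  simp [T1star, SimpleGraph.fromRel_adj]

lemma T1_adj_xy (i : Fin k) : (T1star k).Adj (Sum.inr (i, 0)) (Sum.inr (i, 1)) := by
  simp [T1star, SimpleGraph.fromRel_adj]

lemma T1_adj_y (i : Fin k) (u : Unit ⊕ Fin k × Fin 2)
    (h : (T1star k).Adj (Sum.inr (i, 1)) u) : u = Sum.inr (i, 0) := by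
  rcases u with u | ⟨j, b⟩
  · exfalso
    simp [T1star, SimpleGraph.fromRel_adj] at h
  · fin_cases b <;>
      simp_all [T1star, SimpleGraph.fromRel_adj, Prod.ext_iff]

lemma T1_adj_x (i : Fin k) (u : Unit ⊕ Fin k × Fin 2)
    (h : (T1star k).Adj (Sum.inr (i, 0)) u) :
    u = Sum.inl () ∨ u = Sum.inr (i, 1) := by
  rcases u with u | ⟨j, b⟩
  · left; rfl
  · right
    fin_cases b <;>
      simp_all [T1star, SimpleGraph.fromRel_adj, Prod.ext_iff]

lemma T1_TD_range (hk : 0 < k) :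
    isTDSet (T1star k) (Set.range (Sum.inr : Fin k × Fin 2 → Unit ⊕ Fin k × Fin 2)) := by
  intro v
  rcases v with v | ⟨i, b⟩
  · exact ⟨Sum.inr (⟨0, hk⟩, 0), ⟨_, rfl⟩, T1_adj_vx _⟩
  · fin_cases b
    · exact ⟨Sum.inr (i, 1), ⟨_, rfl⟩, T1_adj_xy i⟩
    · exact ⟨Sum.inr (i, 0), ⟨_, rfl⟩, ((T1star k).adj_symm (T1_adj_xy i))⟩

lemma T1_minTD_range (hk : 0 < k) :
    isMinTDSet (T1star k) (Set.range (Sum.inr : Fin k × Fin 2 → Unit ⊕ Fin k × Fin 2)) := by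
  refine ⟨T1_TD_range hk, ?_⟩
  intro T hT hTD
  obtain ⟨hsub, hne⟩ := hT
  rw [Set.not_subset] at hne
  obtain ⟨a, ha, haT⟩ := hne
  obtain ⟨⟨i, b⟩, rfl⟩ := ha
  fin_cases b
  · -- x_i missing: y_i has no neighbor in T
    obtain ⟨u, huT, hadj⟩ := hTD (Sum.inr (i, 1))
    rw [T1_adj_y i u hadj] at huT
    exact haT huT
  · -- y_i missing: x_i has no neighbor in T
    obtain ⟨u, huT, hadj⟩ := hTD (Sum.inr (i, 0))
    rcases T1_adj_x i u hadj with rfl | rfl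
    · have := hsub huT
      simp at this
    · exact haT huT

lemma T1_card_V : Fintype.card (Unit ⊕ Fin k × Fin 2) = 2 * k + 1 := by
  simp [Fintype.card_sum, Fintype.card_prod]; ring

end Aux

/-- For `k ≥ 3`, the set of all leaves and support vertices of the once-subdivided star
is a minimal TD-set (of maximum cardinality), and `Γ_t(T_k) = 2k`. -/
theorem stmt15 (k : ℕ) (hk : 3 ≤ k) :
    isMinTDSet (T1star k) (Set.range (Sum.inr : Fin k × Fin 2 → Unit ⊕ Fin k × Fin 2)) ∧
    upperTD (T1star k) = 2 * k := by
  have hk0 : 0 < k := by omega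
  have hmin := T1_minTD_range (k := k) hk0
  refine ⟨hmin, ?_⟩
  -- the Finset corresponding to the range of Sum.inr
  set S0 : Finset (Unit ⊕ Fin k × Fin 2) :=
    Finset.univ.image (Sum.inr : Fin k × Fin 2 → Unit ⊕ Fin k × Fin 2) with hS0
  have hS0coe : (↑S0 : Set (Unit ⊕ Fin k × Fin 2)) = Set.range Sum.inr := by
    simp [hS0]
  have hS0card : S0.card = 2 * k := by
    rw [hS0, Finset.card_image_of_injective _ Sum.inr_injective]
    simp [Fintype.card_prod]; ring
  have hmem : 2 * k ∈ {n | ∃ S : Finset (Unit ⊕ Fin k × Fin 2),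
      isMinTDSet (T1star k) ↑S ∧ S.card = n} := ⟨S0, by rw [hS0coe]; exact hmin, hS0card⟩
  have hub : ∀ n ∈ {n | ∃ S : Finset (Unit ⊕ Fin k × Fin 2),
      isMinTDSet (T1star k) ↑S ∧ S.card = n}, n ≤ 2 * k := by
    rintro n ⟨S, hS, rfl⟩
    by_contra hgt
    push_neg at hgt
    have hle : S.card ≤ 2 * k + 1 := by
      have h1 := Finset.card_le_univ S
      have h2 : Fintype.card (Unit ⊕ Fin k × Fin 2) = 2 * k + 1 := T1_card_V
      omega
    have hcard : S.card = 2 * k + 1 := by omega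
    have hSuniv : S = Finset.univ := Finset.eq_univ_of_card S (by rw [hcard, T1_card_V])
    have hss : Set.range (Sum.inr : Fin k × Fin 2 → Unit ⊕ Fin k × Fin 2) ⊂ ↑S := by
      rw [hSuniv]
      constructor
      · simp
      · intro h
        have : Sum.inl () ∈ Set.range (Sum.inr : Fin k × Fin 2 → Unit ⊕ Fin k × Fin 2) :=
          h (by simp)
        simp at this
    exact hS.2 _ hss (T1_TD_range hk0)
  exact le_antisymm (csSup_le ⟨_, hmem⟩ hub) (le_csSup ⟨2 * k, hub⟩ hmem)
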